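/- Let z ∈ K. Then ∑_{i=0}^{n−1} z^(e_i) = 0, where e_i = ∑_{j=0}^{i−1} σ^j, holds if and only if there exists a nonzero y ∈ K such that z = y^(σ−1) and Tr(y) = 0. -/

import Mathlib

private lemma aux_pow_mod {K : Type*} [Field K] [Fintype K] {q n : ℕ}
    (hK : Fintype.card K = q ^ n) (x : K) (m : ℕ) :
    x ^ q ^ m = x ^ q ^ (m % n) := by
  calc x ^ q ^ m = (x ^ q ^ (m % n)) ^ (q ^ n) ^ (m / n) := by
        rw [← pow_mul, ← pow_mul, ← pow_add, Nat.mod_add_div]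
    _ = x ^ q ^ (m % n) := by rw [← hK]; exact FiniteField.pow_card_pow _ _

private lemma aux_key {n : ℕ} (hn1 : 1 < n) {a b : ℕ} (hab : a * b % n = 1) :
    ∀ i < n, a * (b * i % n) % n = i := by
  intro i hi
  have h1 : a * (b * i % n) ≡ (a * b) * i [MOD n] := by
    calc a * (b * i % n) ≡ a * (b * i) [MOD n] :=
          Nat.ModEq.mul_left a (Nat.mod_modEq _ n)
      _ = (a * b) * i := by ring
  have h2 : (a * b) * i ≡ 1 * i [MOD n] :=
    Nat.ModEq.mul_right i (show a * b % n = 1 % n by rw [hab, Nat.mod_eq_of_lt hn1])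
  have h3 : a * (b * i % n) % n = (1 * i) % n := h1.trans h2
  rwa [one_mul, Nat.mod_eq_of_lt hi] at h3

private lemma aux_reindex {K : Type*} [Field K] [Fintype K] {q n s : ℕ}
    (hK : Fintype.card K = q ^ n) (hn1 : 1 < n) (hsn : Nat.Coprime s n) (x : K) :
    ∑ i ∈ Finset.range n, x ^ q ^ (s * i) = ∑ i ∈ Finset.range n, x ^ q ^ i := by
  have hn0 : 0 < n := by omega
  obtain ⟨t, -, ht⟩ := Nat.exists_mul_mod_eq_one_of_coprime hsn hn1
  have ht' : t * s % n = 1 := by rwa [mul_comm] at ht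
  have hstep : ∀ i ∈ Finset.range n, x ^ q ^ (s * i) = x ^ q ^ (s * i % n) :=
    fun i _ => aux_pow_mod hK x (s * i)
  rw [Finset.sum_congr rfl hstep]
  refine Finset.sum_nbij' (fun i => s * i % n) (fun j => t * j % n)
    (fun a _ => Finset.mem_range.mpr (Nat.mod_lt _ hn0))
    (fun a _ => Finset.mem_range.mpr (Nat.mod_lt _ hn0))
    (fun a ha => aux_key hn1 ht' a (Finset.mem_range.mp ha))
    (fun a ha => aux_key hn1 ht a (Finset.mem_range.mp ha))
    (fun a _ => rfl)

/-- `∑_{i=0}^{n-1} z^{e_i} = 0` iff `z = y^(σ-1)` for some nonzero `y` with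
`Tr(y) = 0`. -/
theorem stmt_3 (q n s : ℕ) (hq : IsPrimePow q) (hn : 3 ≤ n) (hs : 0 < s)
    (hsn : Nat.Coprime s n) (K : Type*) [Field K] [Fintype K]
    (hK : Fintype.card K = q ^ n) (z : K) :
    (∑ i ∈ Finset.range n, z ^ (∑ j ∈ Finset.range i, (q ^ s) ^ j)) = 0 ↔
    ∃ y : K, y ≠ 0 ∧ z = y ^ (q ^ s - 1) ∧ ∑ i ∈ Finset.range n, y ^ (q ^ i) = 0 := by
  have hq2 : 2 ≤ q := hq.two_le
  have hn0 : 0 < n := by omega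
  set σ := q ^ s with hσ
  clear_value σ
  have hσ2 : 2 ≤ σ := by
    rw [hσ]
    calc 2 ≤ q := hq2
      _ = q ^ 1 := (pow_one q).symm
      _ ≤ q ^ s := Nat.pow_le_pow_right (by omega) hs
  -- characteristic facts
  obtain ⟨p, k, hp, hk, hpk⟩ := hq
  have hpp : p.Prime := Nat.prime_iff.mpr hp
  haveI : Fact p.Prime := ⟨hpp⟩
  have hcharP : CharP K (ringChar K) := ringChar.charP K
  have hdvd : ringChar K ∣ q ^ n := (CharP.cast_eq_zero_iff K _ _).mp
    (by rw [← hK]; exact Nat.cast_card_eq_zero K)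
  have hrc : ringChar K = p := by
    have hrp : (ringChar K).Prime := CharP.char_is_prime K _
    have hdp : ringChar K ∣ p := hrp.dvd_of_dvd_pow
      (show ringChar K ∣ p ^ (k * n) by rwa [pow_mul, hpk])
    exact (Nat.prime_dvd_prime_iff_eq hrp hpp).mp hdp
  haveI hcharp : CharP K p := hrc ▸ hcharP
  haveI : ExpChar K p := ExpChar.prime hpp
  have hfrob : ∀ (m : Finset ℕ) (f : ℕ → K),
      (∑ i ∈ m, f i) ^ σ = ∑ i ∈ m, f i ^ σ := by
    intro m f
    have hqs : σ = p ^ (k * s) := by rw [hσ, ← hpk, ← pow_mul]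
    rw [hqs]
    simpa only [iterateFrobenius_def] using map_sum (iterateFrobenius K p (k * s)) f m
  -- key iteration lemma
  have L1 : ∀ y : K, z * y = y ^ σ → ∀ i,
      y ^ σ ^ i = z ^ (∑ j ∈ Finset.range i, σ ^ j) * y := by
    intro y hy i
    induction i with
    | zero => simp
    | succ i ih =>
      calc y ^ σ ^ (i + 1) = (y ^ σ ^ i) ^ σ := by rw [pow_succ, pow_mul]
        _ = (z ^ (∑ j ∈ Finset.range i, σ ^ j)) ^ σ * y ^ σ := by rw [ih, mul_pow]
        _ = z ^ (σ * ∑ j ∈ Finset.range i, σ ^ j) * (z * y) := by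
            rw [← hy, ← pow_mul, mul_comm (∑ j ∈ Finset.range i, σ ^ j) σ]
        _ = z ^ (σ * ∑ j ∈ Finset.range i, σ ^ j + 1) * y := by
            rw [pow_add, pow_one]; ring
        _ = z ^ (∑ j ∈ Finset.range (i + 1), σ ^ j) * y := by rw [geom_sum_succ]
  -- trace reindexing
  have L2 : ∀ y : K, (∑ i ∈ Finset.range n, y ^ σ ^ i) = ∑ i ∈ Finset.range n, y ^ q ^ i := by
    intro y
    have h : ∀ i ∈ Finset.range n, y ^ σ ^ i = y ^ q ^ (s * i) := by
      intro i _; rw [hσ, ← pow_mul]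
    rw [Finset.sum_congr rfl h]
    exact aux_reindex hK (by omega) hsn y
  constructor
  · intro hS
    -- z ≠ 0
    have hz : z ≠ 0 := by
      intro hz0
      rw [hz0] at hS
      have hzero : ∀ i ∈ Finset.range n, i ≠ 0 →
          (0 : K) ^ (∑ j ∈ Finset.range i, σ ^ j) = 0 := by
        intro i _ hi
        apply zero_pow
        have hle : σ ^ 0 ≤ ∑ j ∈ Finset.range i, σ ^ j :=
          Finset.single_le_sum (f := fun j => σ ^ j) (fun j _ => Nat.zero_le _)
            (Finset.mem_range.mpr (Nat.pos_of_ne_zero hi))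
        simp only [pow_zero] at hle
        omega
      rw [Finset.sum_eq_single_of_mem 0 (Finset.mem_range.mpr hn0) hzero] at hS
      simp at hS
    -- norm-type condition : z ^ e_n = 1
    have hN : z ^ (∑ j ∈ Finset.range n, σ ^ j) = 1 := by
      have h1 : (∑ i ∈ Finset.range (n + 1), z ^ (∑ j ∈ Finset.range i, σ ^ j))
          = z ^ (∑ j ∈ Finset.range n, σ ^ j) := by
        rw [Finset.sum_range_succ, hS, zero_add]
      have h2 : (∑ i ∈ Finset.range (n + 1), z ^ (∑ j ∈ Finset.range i, σ ^ j)) = 1 := by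
        rw [Finset.sum_range_succ']
        have hterm : ∀ i, z ^ (∑ j ∈ Finset.range (i + 1), σ ^ j)
            = z * (z ^ (∑ j ∈ Finset.range i, σ ^ j)) ^ σ := by
          intro i
          rw [geom_sum_succ, pow_add, pow_one, mul_comm σ (∑ j ∈ Finset.range i, σ ^ j),
            pow_mul, mul_comm]
        simp_rw [hterm]
        rw [← Finset.mul_sum,
          ← hfrob (Finset.range n) (fun i => z ^ (∑ j ∈ Finset.range i, σ ^ j)), hS]
        have hσ0 : σ ≠ 0 := by omega
        simp [zero_pow hσ0]
      rw [← h1, h2]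
    -- set up the linearized polynomial
    set w := z⁻¹ with hw
    have hwN : w ^ (∑ j ∈ Finset.range n, σ ^ j) = 1 := by
      rw [hw, inv_pow, hN, inv_one]
    obtain ⟨t, -, ht⟩ := Nat.exists_mul_mod_eq_one_of_coprime hsn (by omega)
    have ht' : t * s % n = 1 := by rwa [mul_comm] at ht
    set P : Polynomial K := ∑ i ∈ Finset.range n,
      Polynomial.C (w ^ (∑ j ∈ Finset.range i, σ ^ j)) * Polynomial.X ^ (q ^ (s * i % n))
      with hP
    have hPcoeff : P.coeff 1 = 1 := by
      rw [hP, Polynomial.finset_sum_coeff]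
      rw [Finset.sum_eq_single_of_mem 0 (Finset.mem_range.mpr hn0)]
      · simp
      · intro i hi hi0
        rw [Polynomial.coeff_C_mul, Polynomial.coeff_X_pow]
        have hmod : s * i % n ≠ 0 := by
          intro h0
          apply hi0
          have := aux_key (by omega : 1 < n) ht' i (Finset.mem_range.mp hi)
          rw [h0] at this
          simpa using this.symm
        have h1lt : 1 < q ^ (s * i % n) := Nat.one_lt_pow hmod (by omega)
        rw [if_neg (by omega), mul_zero]
    have hPne : P ≠ 0 := fun h => by simp [h] at hPcoeff
    have hPdeg : P.natDegree < Fintype.card K := by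
      rw [hK]
      have hle : P.natDegree ≤ q ^ (n - 1) := by
        rw [hP]
        apply Polynomial.natDegree_sum_le_of_forall_le
        intro i _
        refine le_trans (Polynomial.natDegree_C_mul_le _ _) ?_
        rw [Polynomial.natDegree_X_pow]
        exact Nat.pow_le_pow_right (by omega)
          (by have := Nat.mod_lt (s * i) hn0; omega)
      calc P.natDegree ≤ q ^ (n - 1) := hle
        _ < q ^ n := Nat.pow_lt_pow_right (by omega) (by omega)
    obtain ⟨x, hx⟩ := P.exists_eval_ne_zero_of_natDegree_lt_card hPne
      (by rw [Cardinal.mk_fintype]; exact_mod_cast hPdeg)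
    have hy0 : P.eval x = ∑ i ∈ Finset.range n,
        w ^ (∑ j ∈ Finset.range i, σ ^ j) * x ^ σ ^ i := by
      rw [hP, Polynomial.eval_finset_sum]
      refine Finset.sum_congr rfl fun i _ => ?_
      rw [Polynomial.eval_mul, Polynomial.eval_C, Polynomial.eval_pow, Polynomial.eval_X]
      congr 1
      rw [hσ, ← pow_mul]
      exact (aux_pow_mod hK x (s * i)).symm
    have hxn : x ^ σ ^ n = x := by
      rw [hσ, ← pow_mul, mul_comm s n, pow_mul, ← hK]
      exact FiniteField.pow_card_pow _ _
    have hkey : w * (P.eval x) ^ σ = P.eval x := by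
      have hgsucc : ∀ i, w ^ (∑ j ∈ Finset.range (i + 1), σ ^ j) * x ^ σ ^ (i + 1)
          = w * ((w ^ (∑ j ∈ Finset.range i, σ ^ j) * x ^ σ ^ i) ^ σ) := by
        intro i
        rw [geom_sum_succ, mul_pow, ← pow_mul w, ← pow_mul x, ← pow_succ σ i,
          mul_comm (∑ j ∈ Finset.range i, σ ^ j) σ, pow_add, pow_one]
        ring
      have h1 : (∑ i ∈ Finset.range (n + 1),
          w ^ (∑ j ∈ Finset.range i, σ ^ j) * x ^ σ ^ i)
          = w * (P.eval x) ^ σ + x := by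
        rw [Finset.sum_range_succ']
        simp_rw [hgsucc]
        rw [← Finset.mul_sum,
          ← hfrob (Finset.range n) (fun i => w ^ (∑ j ∈ Finset.range i, σ ^ j) * x ^ σ ^ i),
          ← hy0]
        simp
      have h2 : (∑ i ∈ Finset.range (n + 1),
          w ^ (∑ j ∈ Finset.range i, σ ^ j) * x ^ σ ^ i)
          = P.eval x + x := by
        rw [Finset.sum_range_succ, ← hy0, hwN, hxn, one_mul]
      exact add_right_cancel (h1.symm.trans h2)
    have hzy : z * P.eval x = (P.eval x) ^ σ := by
      calc z * P.eval x = z * (w * (P.eval x) ^ σ) := by rw [hkey]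
        _ = (z * w) * (P.eval x) ^ σ := by ring
        _ = (P.eval x) ^ σ := by rw [hw, mul_inv_cancel₀ hz, one_mul]
    refine ⟨P.eval x, hx, ?_, ?_⟩
    · have h : (P.eval x) ^ (σ - 1) * P.eval x = z * P.eval x := by
        rw [hzy, ← pow_succ]
        congr 1
        omega
      exact (mul_right_cancel₀ hx h).symm
    · rw [← L2]
      have hiter := L1 (P.eval x) hzy
      simp_rw [hiter]
      rw [← Finset.sum_mul, hS, zero_mul]
  · rintro ⟨y, hy0, rfl, hTr⟩
    have hzy : y ^ (σ - 1) * y = y ^ σ := by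
      rw [← pow_succ]
      congr 1
      omega
    have hmul : (∑ i ∈ Finset.range n,
        (y ^ (σ - 1)) ^ (∑ j ∈ Finset.range i, σ ^ j)) * y = 0 := by
      rw [Finset.sum_mul]
      simp_rw [← L1 y hzy]
      rw [L2, hTr]
    exact (mul_eq_zero.mp hmul).resolve_right hy0
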